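/- Let {Z_t}_{t=0}^∞ be a nonnegative sequence satisfying Z_{t+1} ≤ a + b √(max_{0≤i≤t} Z_i) for all t ≥ 0, where a, b ≥ 0. Then for all t ≥ 0, Z_t ≤ max(Z_0, c) where c = ((b + √(b² + 4a))/2)². In particular Z_t ≤ max(Z_0, 2b² + 2a). -/

import Mathlib

theorem bounded_by_running_max (a b : ℝ) (ha : 0 ≤ a) (hb : 0 ≤ b)
    (Z : ℕ → ℝ) (hZ : ∀ t, 0 ≤ Z t)
    (hrec : ∀ t, Z (t + 1)
      ≤ a + b * Real.sqrt ((Finset.range (t + 1)).sup' Finset.nonempty_range_add_one Z)) :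
    ∀ t, Z t ≤ max (Z 0) (((b + Real.sqrt (b^2 + 4*a)) / 2)^2)
      ∧ Z t ≤ max (Z 0) (2 * b^2 + 2 * a) := by
  set d := Real.sqrt (b^2 + 4*a) with hd
  have hd0 : 0 ≤ d := Real.sqrt_nonneg _
  have hd2 : d^2 = b^2 + 4*a := Real.sq_sqrt (by positivity)
  set c := ((b + d) / 2)^2 with hc
  set M := max (Z 0) c with hM
  have hc0 : 0 ≤ c := sq_nonneg _
  have hMc : c ≤ M := le_max_right _ _
  have hM0 : 0 ≤ M := le_trans hc0 hMc
  have hsqrtc : Real.sqrt c = (b + d)/2 := Real.sqrt_sq (by positivity)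
  have key : a + b * Real.sqrt M ≤ M := by
    have hs : Real.sqrt M ^ 2 = M := Real.sq_sqrt hM0
    have hsc : (b+d)/2 ≤ Real.sqrt M := by
      rw [← hsqrtc]; exact Real.sqrt_le_sqrt hMc
    nlinarith [Real.sqrt_nonneg M]
  have main : ∀ t, Z t ≤ M := by
    intro t
    induction t using Nat.strong_induction_on with
    | _ t ih =>
      cases t with
      | zero => exact le_max_left _ _
      | succ n =>
        have hsup : (Finset.range (n + 1)).sup' Finset.nonempty_range_add_one Z ≤ M :=
          Finset.sup'_le _ _ (fun i hi => ih i (Finset.mem_range.mp hi))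
        calc Z (n+1) ≤ a + b * Real.sqrt ((Finset.range (n + 1)).sup' Finset.nonempty_range_add_one Z) := hrec n
        _ ≤ a + b * Real.sqrt M := by gcongr
        _ ≤ M := key
  have hc2 : c ≤ 2 * b^2 + 2 * a := by nlinarith [sq_nonneg (b - d)]
  intro t
  exact ⟨main t, (main t).trans (max_le_max le_rfl hc2)⟩
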